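/- With the hypotheses and definition of A_K as in the regularization of a strictly dominating family, the assignment K ↦ A_K is upper semicontinuous from K(M) (with the Hausdorff metric topology) to K(X): for any compact K ⊆ M and open V ⊆ X with A_K ⊆ V, there is δ > 0 such that A_L ⊆ V whenever the Hausdorff distance between K and L is less than δ. -/

import Mathlib

open scoped ENNReal

open Filter Metric Set Topology in
/-- Auxiliary: a compact set together with a sequence of compact sets shrinking to it
is compact. -/
lemma regularization_usc_aux {M : Type*} [MetricSpace M] {K : Set M} (hK : IsCompact K)
    (hne : K.Nonempty) (C : ℕ → Set M) (hC : ∀ k, IsCompact (C k)) (r : ℕ → ℝ)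
    (hr : ∀ δ : ℝ, 0 < δ → ∃ N, ∀ k, N ≤ k → r k < δ)
    (hCr : ∀ k, ∀ t ∈ C k, Metric.infDist t K ≤ r k) :
    IsCompact (K ∪ ⋃ k, C k) := by
  rw [isCompact_iff_ultrafilter_le_nhds]
  intro f hf
  by_cases hCk : ∃ k, C k ∈ f
  · obtain ⟨k, hk⟩ := hCk
    obtain ⟨x, hx, hfx⟩ := (hC k).ultrafilter_le_nhds f (le_principal_iff.2 hk)
    exact ⟨x, Or.inr (Set.mem_iUnion.2 ⟨k, hx⟩), hfx⟩
  push_neg at hCk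
  by_cases hKf : K ∈ f
  · obtain ⟨x, hx, hfx⟩ := hK.ultrafilter_le_nhds f (le_principal_iff.2 hKf)
    exact ⟨x, Or.inl hx, hfx⟩
  by_contra hcon
  push_neg at hcon
  have hx' : ∀ x : M, ∃ ε : ℝ, 0 < ε ∧ (x ∈ K → Metric.ball x ε ∉ f) := by
    intro x
    by_cases hx : x ∈ K
    · have h1 : ¬ (↑f : Filter M) ≤ 𝓝 x := hcon x (Or.inl hx)
      rw [Filter.le_def] at h1
      push_neg at h1
      obtain ⟨s, hs, hsf⟩ := h1
      obtain ⟨ε, hε, hball⟩ := Metric.mem_nhds_iff.1 hs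
      exact ⟨ε, hε, fun _ hb => hsf (Filter.mem_of_superset hb hball)⟩
    · exact ⟨1, one_pos, fun h => absurd h hx⟩
  choose ε hε hεf using hx'
  obtain ⟨t, htK, hcover⟩ := hK.elim_nhds_subcover (fun x => Metric.ball x (ε x))
    (fun x _ => Metric.ball_mem_nhds x (hε x))
  set W : Set M := ⋃ x ∈ t, Metric.ball x (ε x) with hW
  have hWopen : IsOpen W := isOpen_biUnion fun _ _ => Metric.isOpen_ball
  have hWf : W ∉ f := by
    intro h
    obtain ⟨x, hxt, hxf⟩ := (Ultrafilter.finite_biUnion_mem_iff t.finite_toSet).1 h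
    exact hεf x (htK x hxt) hxf
  obtain ⟨δ, hδ, hthick⟩ := hK.exists_thickening_subset_open hWopen hcover
  obtain ⟨N, hN⟩ := hr δ hδ
  have hTf : (K ∪ ⋃ k, C k) ∈ f := le_principal_iff.1 hf
  have hS : ((K ∪ ⋃ k, C k) ∩ (Kᶜ ∩ ⋂ k ∈ Finset.range N, (C k)ᶜ)) ∈ f := by
    refine Filter.inter_mem hTf (Filter.inter_mem (Ultrafilter.compl_mem_iff_notMem.2 hKf) ?_)
    exact (Filter.biInter_mem (Finset.range N).finite_toSet).2
      fun k _ => Ultrafilter.compl_mem_iff_notMem.2 (hCk k)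
  have hsub : ((K ∪ ⋃ k, C k) ∩ (Kᶜ ∩ ⋂ k ∈ Finset.range N, (C k)ᶜ)) ⊆ W := by
    rintro y ⟨hyT, hyK, hyC⟩
    rcases hyT with hyT | hyT
    · exact absurd hyT hyK
    obtain ⟨k, hyk⟩ := Set.mem_iUnion.1 hyT
    have hkN : N ≤ k := by
      by_contra hk
      exact (Set.mem_iInter₂.1 hyC k (Finset.mem_range.2 (not_le.1 hk))) hyk
    apply hthick
    exact (Metric.mem_thickening_iff_infDist_lt hne).2
      (lt_of_le_of_lt (hCr k y hyk) (hN k hkN))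
  exact hWf (Filter.mem_of_superset hS hsub)

/-- The regularized assignment `K ↦ A_K` is upper semicontinuous with respect to the
Hausdorff distance on compact subsets of `M`. -/
theorem regularization_usc (M X : Type*) [MetricSpace M] [MetricSpace X]
    (F : Set M → Set X)
    (hFcomp : ∀ K : Set M, IsCompact K → IsCompact (F K))
    (hFmono : ∀ K L : Set M, IsCompact K → IsCompact L → K ⊆ L → F K ⊆ F L)
    (hFcover : (⋃ K ∈ {K : Set M | IsCompact K}, F K) = Set.univ)
    (A : Set M → Set X)
    (hA0 : A ∅ = F ∅)
    (hA : ∀ K : Set M, K.Nonempty → A K =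
      ⋂ n ∈ {n : ℕ | 1 ≤ n}, ⋃ L ∈ {L : Set M | IsCompact L ∧ K ⊆ L ∧
        ∀ t ∈ L, Metric.infDist t K < 1 / (n : ℝ)}, F L) :
    ∀ K : Set M, IsCompact K → ∀ V : Set X, IsOpen V → A K ⊆ V →
      ∃ δ : ℝ≥0∞, 0 < δ ∧ ∀ L : Set M, IsCompact L →
        EMetric.hausdorffEdist K L < δ → A L ⊆ V := by
  intro K hK V hV hAV
  by_cases hKne : K.Nonempty
  swap
  · rw [Set.not_nonempty_iff_eq_empty] at hKne
    subst hKne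
    refine ⟨1, one_pos, fun L hL hdist => ?_⟩
    have hLe : L = ∅ := by
      by_contra hL'
      have hL'' : L.Nonempty := Set.nonempty_iff_ne_empty.2 hL'
      unfold EMetric.hausdorffEdist at hdist
      rw [EMetric.hausdorffEdist_comm, EMetric.hausdorffEdist_empty hL''] at hdist
      exact absurd hdist (by simp)
    subst hLe
    exact hAV
  by_contra hcon
  push_neg at hcon
  have H : ∀ k : ℕ, ∃ L : Set M, IsCompact L ∧
      EMetric.hausdorffEdist K L < ENNReal.ofReal (1 / ((k : ℝ) + 1)) ∧
      ∃ x, x ∈ A L ∧ x ∉ V := by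
    intro k
    obtain ⟨L, hL, hd, hAL⟩ := hcon (ENNReal.ofReal (1 / ((k : ℝ) + 1)))
      (ENNReal.ofReal_pos.2 (by positivity))
    obtain ⟨x, hx1, hx2⟩ := Set.not_subset.1 hAL
    exact ⟨L, hL, hd, x, hx1, hx2⟩
  choose L hLc hLd x hxA hxV using H
  have hLne : ∀ k, (L k).Nonempty := fun k =>
    EMetric.nonempty_of_hausdorffEdist_ne_top hKne (ne_top_of_lt (hLd k))
  have hedist_ne : ∀ k, EMetric.hausdorffEdist (L k) K ≠ ⊤ := fun k => by
    unfold EMetric.hausdorffEdist; rw [EMetric.hausdorffEdist_comm]; exact ne_top_of_lt (hLd k)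
  have hd : ∀ k, Metric.hausdorffDist (L k) K < 1 / ((k : ℝ) + 1) := by
    intro k
    have h := hLd k
    unfold EMetric.hausdorffEdist at h
    rw [EMetric.hausdorffEdist_comm] at h
    exact (ENNReal.lt_ofReal_iff_toReal_lt (ne_top_of_lt h)).1 h
  have hx' : ∀ k : ℕ, ∃ C : Set M, IsCompact C ∧ L k ⊆ C ∧
      (∀ t ∈ C, Metric.infDist t (L k) < 1 / ((k : ℝ) + 1)) ∧ x k ∈ F C := by
    intro k
    have hmem := hxA k
    rw [hA (L k) (hLne k)] at hmem
    have h1 := Set.mem_iInter₂.1 hmem (k + 1) (by simp)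
    obtain ⟨C, hC, hxC⟩ := Set.mem_iUnion₂.1 h1
    refine ⟨C, hC.1, hC.2.1, fun t ht => ?_, hxC⟩
    have := hC.2.2 t ht
    rwa [Nat.cast_add, Nat.cast_one] at this
  choose C hCc hCL hCd hxF using hx'
  set D : ℕ → Set M := fun k => C k ∪ K with hD
  have hDc : ∀ k, IsCompact (D k) := fun k => (hCc k).union hK
  have hDd : ∀ k, ∀ t ∈ D k, Metric.infDist t K ≤ 2 / ((k : ℝ) + 1) := by
    rintro k t (ht | ht)
    · have h1 : Metric.infDist t K ≤ Metric.infDist t (L k) + Metric.hausdorffDist (L k) K :=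
        Metric.infDist_le_infDist_add_hausdorffDist (hedist_ne k)
      have h2 := hCd k t ht
      have h3 := hd k
      have : Metric.infDist t K < 1 / ((k : ℝ) + 1) + 1 / ((k : ℝ) + 1) := by linarith
      have hk : (0 : ℝ) < (k : ℝ) + 1 := by positivity
      rw [← add_div] at this
      linarith
    · rw [Metric.infDist_zero_of_mem ht]; positivity
  set T : ℕ → Set M := fun m => K ∪ ⋃ k, D (m + k) with hT
  have hTc : ∀ m, IsCompact (T m) := by
    intro m
    refine regularization_usc_aux hK hKne (fun k => D (m + k)) (fun k => hDc _)
      (fun k => 2 / (((m + k : ℕ) : ℝ) + 1)) ?_ (fun k t ht => hDd (m + k) t ht)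
    intro δ hδ
    obtain ⟨N, hN⟩ := exists_nat_gt (2 / δ)
    refine ⟨N, fun k hk => ?_⟩
    have h1 : (0 : ℝ) < ((m + k : ℕ) : ℝ) + 1 := by positivity
    rw [div_lt_iff₀ h1]
    have h2 : 2 / δ < ((m + k : ℕ) : ℝ) + 1 := by
      have : (N : ℝ) ≤ ((m + k : ℕ) : ℝ) := by exact_mod_cast le_trans hk (Nat.le_add_left k m)
      linarith
    calc (2 : ℝ) = (2 / δ) * δ := by field_simp
    _ < (((m + k : ℕ) : ℝ) + 1) * δ := by
        exact mul_lt_mul_of_pos_right h2 hδ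
    _ = δ * (((m + k : ℕ) : ℝ) + 1) := by ring
  have hKT : ∀ m, K ⊆ T m := fun m => Set.subset_union_left
  have hxT : ∀ m k, m ≤ k → x k ∈ F (T m) := by
    intro m k hmk
    have hDsub : D k ⊆ T m := by
      refine Set.subset_union_right.trans' ?_
      intro y hy
      exact Set.mem_iUnion.2 ⟨k - m, by rwa [Nat.add_sub_cancel' hmk]⟩
    exact hFmono (D k) (T m) (hDc k) (hTc m) hDsub
      (hFmono (C k) (D k) (hCc k) (hDc k) Set.subset_union_left (hxF k))
  obtain ⟨z, hzF0, φ, hφ, hlim⟩ := (hFcomp (T 0) (hTc 0)).tendsto_subseq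
    (fun k => hxT 0 k (Nat.zero_le k))
  have hzV : z ∉ V := by
    have : z ∈ Vᶜ := hV.isClosed_compl.mem_of_tendsto hlim
      (Filter.Eventually.of_forall fun j => hxV (φ j))
    exact this
  have hzT : ∀ m, z ∈ F (T m) := by
    intro m
    refine (hFcomp (T m) (hTc m)).isClosed.mem_of_tendsto hlim ?_
    filter_upwards [Filter.eventually_ge_atTop m] with j hj
    exact hxT m (φ j) (le_trans hj (hφ.le_apply))
  have hzA : z ∈ A K := by
    rw [hA K hKne]
    refine Set.mem_iInter₂.2 fun n hn => ?_
    have hn1 : 1 ≤ n := hn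
    have hnR : (1 : ℝ) ≤ (n : ℝ) := by exact_mod_cast hn1
    refine Set.mem_iUnion₂.2 ⟨T (2 * n), ⟨hTc _, hKT _, ?_⟩, hzT _⟩
    rintro t (ht | ht)
    · rw [Metric.infDist_zero_of_mem ht]; positivity
    obtain ⟨k, hk⟩ := Set.mem_iUnion.1 ht
    have h1 := hDd (2 * n + k) t hk
    have hcast : ((2 * n + k : ℕ) : ℝ) = 2 * (n : ℝ) + (k : ℝ) := by push_cast; ring
    rw [hcast] at h1
    have h2 : (2 : ℝ) / (2 * (n : ℝ) + (k : ℝ) + 1) ≤ 2 / (2 * (n : ℝ) + 1) := by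
      apply div_le_div_of_nonneg_left (by norm_num) (by positivity)
      have : (0 : ℝ) ≤ (k : ℝ) := Nat.cast_nonneg k
      linarith
    have h3 : (2 : ℝ) / (2 * (n : ℝ) + 1) < 1 / (n : ℝ) := by
      rw [div_lt_div_iff₀ (by positivity) (by positivity)]
      linarith
    linarith
  exact hzV (hAV hzA)
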